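/- Let X be a Banach space, k ∈ ℕ, (x_s)_{s∈[ℕ]^k} a k-sequence in X, and x_0 ∈ X. Let x'_s = x_s − x_0 for all s ∈ [ℕ]^k, and assume that (x_s)_{s∈[ℕ]^k} generates a k-spreading model (e_n)_n and (x'_s)_{s∈[ℕ]^k} generates a k-spreading model (ẽ_n)_n (both with M = ℕ, each with respect to some null sequence of positive reals). Then: (a) ‖Σ_{i=1}^n a_i e_i‖_* = ‖Σ_{i=1}^n a_i ẽ_i‖_{**} for every n ∈ ℕ and a_1, …, a_n ∈ ℝ with Σ_{i=1}^n a_i = 0; and (c) (e_n)_n is equivalent to the usual basis of ℓ^1 if and only if (ẽ_n)_n is equivalent to the usual basis of ℓ^1. -/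

import Mathlib

/-- `s : Fin k → ℕ` is the increasing enumeration of a `k`-element subset of `M`. -/
def IsEnum (M : Set ℕ) {k : ℕ} (s : Fin k → ℕ) : Prop :=
  StrictMono s ∧ ∀ i, s i ∈ M

/-- `(p j)_{j=1,…,l}` is a plegma family in `[M]^k`. -/
def IsPlegma (M : Set ℕ) {k l : ℕ} (p : Fin l → Fin k → ℕ) : Prop :=
  (∀ j, IsEnum M (p j)) ∧
  (∀ i : Fin k, StrictMono fun j : Fin l => p j i) ∧
  (∀ (i : Fin k) (hi : (i : ℕ) + 1 < k) (j j' : Fin l), p j i < p j' ⟨(i : ℕ) + 1, hi⟩)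


/-- A null sequence of positive reals. -/
def IsNullPos (δ : ℕ → ℝ) : Prop :=
  (∀ n, 0 < δ n) ∧ Filter.Tendsto δ Filter.atTop (nhds 0)

/-- The sequence `(e n)` is spreading with respect to the seminorm `ρ`:
`ρ (∑ a_i • e_i) = ρ (∑ a_i • e_{k_i})` for all strictly increasing `(k_i)`. -/
def IsSpreadingWith {E : Type*} [AddCommGroup E] [Module ℝ E]
    (ρ : Seminorm ℝ E) (e : ℕ → E) : Prop :=
  ∀ (n : ℕ) (a : Fin n → ℝ) (f : Fin n → ℕ), StrictMono f →
    ρ (∑ i, a i • e (i : ℕ)) = ρ (∑ i, a i • e (f i))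

/-- The `k`-subsequence `(x_s)_{s ∈ [M]^k}` generates `(e n)` (in the seminormed space
`(E, ρ)`) as a `k`-spreading model with respect to the null sequence `δ`: for all
`m ≤ l` (0-indexed), every plegma family `(p j)_{j=0}^{m}` in `[M]^k` whose first (hence
every) entry is `≥ M l`, and all coefficients in `[-1,1]`,
`| ‖∑ a_j • x_{p j}‖ - ρ (∑ a_j • e_j) | ≤ δ l`. The infinite set `M` is represented by
its increasing enumeration. -/
def Generates {X : Type*} [SeminormedAddCommGroup X] [NormedSpace ℝ X]
    {E : Type*} [AddCommGroup E] [Module ℝ E] (ρ : Seminorm ℝ E)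
    {k : ℕ} (x : (Fin k → ℕ) → X) (M : ℕ → ℕ) (e : ℕ → E) (δ : ℕ → ℝ) : Prop :=
  ∀ m l : ℕ, m ≤ l → ∀ p : Fin (m + 1) → Fin k → ℕ,
    IsPlegma (Set.range M) p →
    (∀ (j : Fin (m + 1)) (i : Fin k), M l ≤ p j i) →
    ∀ a : Fin (m + 1) → ℝ, (∀ j, a j ∈ Set.Icc (-1 : ℝ) 1) →
      |‖∑ j, a j • x (p j)‖ - ρ (∑ j, a j • e (j : ℕ))| ≤ δ l


/-- `(e n)` admits a lower `ℓ¹`-estimate of constant `c` with respect to the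
seminorm `ρ`. -/
def LowerL1 {E : Type*} [AddCommGroup E] [Module ℝ E]
    (ρ : Seminorm ℝ E) (e : ℕ → E) (c : ℝ) : Prop :=
  ∀ (n : ℕ) (a : Fin n → ℝ), c * ∑ i, |a i| ≤ ρ (∑ i, a i • e (i : ℕ))

/-- `(e n)` is equivalent to the usual basis of `ℓ¹` with respect to the seminorm `ρ`. -/
def EquivL1Basis {E : Type*} [AddCommGroup E] [Module ℝ E]
    (ρ : Seminorm ℝ E) (e : ℕ → E) : Prop :=
  ∃ c C : ℝ, 0 < c ∧ c ≤ C ∧ LowerL1 ρ e c ∧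
    ∀ (n : ℕ) (a : Fin n → ℝ), ρ (∑ i, a i • e (i : ℕ)) ≤ C * ∑ i, |a i|


section St12Helpers

open Filter

private lemma st12_plegma {k : ℕ} (w o m l : ℕ) (how : o + m < w) :
    IsPlegma (Set.range (fun t : ℕ => t))
      (fun (j : Fin (m+1)) (i : Fin k) => l + (i : ℕ) * w + (o + (j : ℕ))) := by
  refine ⟨fun j => ⟨?_, fun i => ⟨_, rfl⟩⟩, ?_, ?_⟩
  · intro i i' hii
    show l + (i : ℕ) * w + (o + (j : ℕ)) < l + (i' : ℕ) * w + (o + (j : ℕ))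
    have h1 : ((i:ℕ)+1) * w ≤ (i':ℕ) * w :=
      Nat.mul_le_mul (Nat.succ_le_of_lt hii) le_rfl
    have h2 : ((i:ℕ)+1)*w = (i:ℕ)*w + w := by ring
    linarith
  · intro i j j' hjj
    show l + (i : ℕ) * w + (o + (j : ℕ)) < l + (i : ℕ) * w + (o + (j' : ℕ))
    exact Nat.add_lt_add_left (Nat.add_lt_add_left hjj o) _
  · intro i hi j j'
    show l + (i : ℕ) * w + (o + (j : ℕ)) <
        l + ((⟨(i:ℕ)+1, hi⟩ : Fin k) : ℕ) * w + (o + (j' : ℕ))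
    have hc : ((⟨(i:ℕ)+1, hi⟩ : Fin k) : ℕ) = (i:ℕ)+1 := rfl
    rw [hc]
    have h2 : ((i:ℕ)+1)*w = (i:ℕ)*w + w := by ring
    have hj : (j:ℕ) < m + 1 := j.isLt
    linarith

private lemma st12_approx {X : Type*} [SeminormedAddCommGroup X] [NormedSpace ℝ X]
    {E : Type*} [AddCommGroup E] [Module ℝ E] (ρ : Seminorm ℝ E)
    {k : ℕ} (x : (Fin k → ℕ) → X) (e : ℕ → E) (δ : ℕ → ℝ)
    (hgen : Generates ρ x (fun n => n) e δ)
    (m l : ℕ) (hml : m ≤ l) (w o : ℕ) (how : o + m < w)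
    (a : Fin (m+1) → ℝ) (ha : ∀ j, |a j| ≤ 1) :
    |‖∑ j, a j • x (fun i : Fin k => l + (i : ℕ) * w + (o + (j : ℕ)))‖ -
      ρ (∑ j, a j • e (j : ℕ))| ≤ δ l := by
  refine hgen m l hml _ (st12_plegma w o m l how) (fun j i => ?_) a
    (fun j => Set.mem_Icc.mpr (abs_le.mp (ha j)))
  exact le_trans (Nat.le_add_right _ _) (Nat.le_add_right _ _)

private lemma st12_exists_l (δ δ' : ℕ → ℝ)
    (hδ : Tendsto δ atTop (nhds 0)) (hδ' : Tendsto δ' atTop (nhds 0))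
    (m : ℕ) {ε : ℝ} (hε : 0 < ε) :
    ∃ l, m ≤ l ∧ δ l < ε ∧ δ' l < ε := by
  obtain ⟨l, h1, h2, h3⟩ := ((eventually_ge_atTop m).and
    ((hδ.eventually_lt_const hε).and (hδ'.eventually_lt_const hε))).exists
  exact ⟨l, h1, h2, h3⟩

private lemma st12_swap_gen {X : Type*} [AddCommGroup X] [Module ℝ X]
    {k : ℕ} (x x' : (Fin k → ℕ) → X) (x₀ : X) (hx' : ∀ s, x' s = x s - x₀)
    {n : ℕ} (u : Fin n → ℝ) (hu : ∑ j, u j = 0) (p : Fin n → Fin k → ℕ) :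
    ∑ j, u j • x' (p j) = ∑ j, u j • x (p j) :=
  calc ∑ j, u j • x' (p j) = ∑ j, (u j • x (p j) - u j • x₀) := by
        simp [hx', smul_sub]
    _ = (∑ j, u j • x (p j)) - ∑ j, u j • x₀ := Finset.sum_sub_distrib _ _
    _ = (∑ j, u j • x (p j)) - (∑ j, u j) • x₀ := by rw [Finset.sum_smul]
    _ = ∑ j, u j • x (p j) := by rw [hu, zero_smul, sub_zero]

private lemma st12_a_core {X : Type*} [SeminormedAddCommGroup X] [NormedSpace ℝ X]
    {E E' : Type*} [AddCommGroup E] [Module ℝ E] [AddCommGroup E'] [Module ℝ E']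
    (ρ : Seminorm ℝ E) (ρ' : Seminorm ℝ E') {k : ℕ}
    (x x' : (Fin k → ℕ) → X) (e : ℕ → E) (e' : ℕ → E') (δ δ' : ℕ → ℝ)
    (hδ : IsNullPos δ) (hδ' : IsNullPos δ')
    (hgen : Generates ρ x (fun n => n) e δ)
    (hgen' : Generates ρ' x' (fun n => n) e' δ')
    (hswap : ∀ {n : ℕ} (u : Fin n → ℝ), ∑ j, u j = 0 → ∀ p : Fin n → Fin k → ℕ,
      ∑ j, u j • x' (p j) = ∑ j, u j • x (p j))
    (m : ℕ) (u : Fin (m+1) → ℝ) (hu1 : ∀ j, |u j| ≤ 1) (hu0 : ∑ j, u j = 0) :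
    ρ (∑ j, u j • e (j : ℕ)) = ρ' (∑ j, u j • e' (j : ℕ)) := by
  have key : ∀ ε : ℝ, 0 < ε →
      |ρ (∑ j, u j • e (j : ℕ)) - ρ' (∑ j, u j • e' (j : ℕ))| ≤ 0 + ε := by
    intro ε hε
    obtain ⟨l, hml, hδl, hδ'l⟩ := st12_exists_l δ δ' hδ.2 hδ'.2 m (half_pos hε)
    have hA := st12_approx ρ x e δ hgen m l hml (m+1) 0 (by omega) u hu1
    have hB := st12_approx ρ' x' e' δ' hgen' m l hml (m+1) 0 (by omega) u hu1
    have hs : (∑ j : Fin (m+1), u j • x' (fun i : Fin k => l + (i : ℕ) * (m+1) + (0 + (j : ℕ))))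
        = ∑ j : Fin (m+1), u j • x (fun i : Fin k => l + (i : ℕ) * (m+1) + (0 + (j : ℕ))) :=
      hswap u hu0 _
    rw [hs] at hB
    have h1 := abs_le.mp hA
    have h2 := abs_le.mp hB
    rw [abs_le]
    constructor <;> linarith
  have h0 : |ρ (∑ j, u j • e (j : ℕ)) - ρ' (∑ j, u j • e' (j : ℕ))| ≤ 0 :=
    le_of_forall_pos_le_add key
  have := abs_nonneg (ρ (∑ j, u j • e (j : ℕ)) - ρ' (∑ j, u j • e' (j : ℕ)))
  have h3 : ρ (∑ j, u j • e (j : ℕ)) - ρ' (∑ j, u j • e' (j : ℕ)) = 0 :=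
    abs_eq_zero.mp (le_antisymm h0 this)
  linarith

private lemma st12_a {X : Type*} [SeminormedAddCommGroup X] [NormedSpace ℝ X]
    {E E' : Type*} [AddCommGroup E] [Module ℝ E] [AddCommGroup E'] [Module ℝ E']
    (ρ : Seminorm ℝ E) (ρ' : Seminorm ℝ E') {k : ℕ}
    (x x' : (Fin k → ℕ) → X) (e : ℕ → E) (e' : ℕ → E') (δ δ' : ℕ → ℝ)
    (hδ : IsNullPos δ) (hδ' : IsNullPos δ')
    (hgen : Generates ρ x (fun n => n) e δ)
    (hgen' : Generates ρ' x' (fun n => n) e' δ')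
    (hswap : ∀ {n : ℕ} (u : Fin n → ℝ), ∑ j, u j = 0 → ∀ p : Fin n → Fin k → ℕ,
      ∑ j, u j • x' (p j) = ∑ j, u j • x (p j)) :
    ∀ (n : ℕ) (a : Fin n → ℝ), ∑ i, a i = 0 →
      ρ (∑ i, a i • e (i : ℕ)) = ρ' (∑ i, a i • e' (i : ℕ)) := by
  intro n a hsum
  obtain _ | m := n
  · simp
  by_cases hS : (∑ i, |a i|) = 0
  · have hz : ∀ i : Fin (m+1), a i = 0 := by
      intro i
      have := (Finset.sum_eq_zero_iff_of_nonneg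
        (fun i _ => abs_nonneg (a i))).mp hS i (Finset.mem_univ i)
      exact abs_eq_zero.mp this
    simp only [hz, zero_smul, Finset.sum_const_zero, map_zero]
  · set S : ℝ := ∑ i, |a i| with hSdef
    have hSpos : 0 < S :=
      lt_of_le_of_ne (Finset.sum_nonneg fun i _ => abs_nonneg _) (Ne.symm hS)
    set u : Fin (m+1) → ℝ := fun i => a i / S with hudef
    have hu1 : ∀ j, |u j| ≤ 1 := by
      intro j
      have hle : |a j| ≤ S := hSdef ▸ Finset.single_le_sum
        (fun i _ => abs_nonneg (a i)) (Finset.mem_univ j)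
      rw [hudef]
      simp only [abs_div, abs_of_pos hSpos]
      exact (div_le_one hSpos).mpr hle
    have hu0 : ∑ j, u j = 0 := by
      simp only [hudef]
      rw [← Finset.sum_div, hsum, zero_div]
    have hreprE : (∑ i : Fin (m+1), a i • e (i : ℕ))
        = S • ∑ i : Fin (m+1), u i • e (i : ℕ) := by
      rw [Finset.smul_sum]
      refine Finset.sum_congr rfl fun i _ => ?_
      rw [smul_smul]
      congr 1
      rw [hudef]
      field_simp
    have hreprE' : (∑ i : Fin (m+1), a i • e' (i : ℕ))
        = S • ∑ i : Fin (m+1), u i • e' (i : ℕ) := by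
      rw [Finset.smul_sum]
      refine Finset.sum_congr rfl fun i _ => ?_
      rw [smul_smul]
      congr 1
      rw [hudef]
      field_simp
    rw [hreprE, hreprE', map_smul_eq_mul, map_smul_eq_mul,
      st12_a_core ρ ρ' x x' e e' δ δ' hδ hδ' hgen hgen' hswap m u hu1 hu0]

private lemma st12_lower {X : Type*} [SeminormedAddCommGroup X] [NormedSpace ℝ X]
    {E E' : Type*} [AddCommGroup E] [Module ℝ E] [AddCommGroup E'] [Module ℝ E']
    (ρ : Seminorm ℝ E) (ρ' : Seminorm ℝ E') {k : ℕ}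
    (x x' : (Fin k → ℕ) → X) (e : ℕ → E) (e' : ℕ → E') (δ δ' : ℕ → ℝ)
    (hδ : IsNullPos δ) (hδ' : IsNullPos δ')
    (hgen : Generates ρ x (fun n => n) e δ)
    (hgen' : Generates ρ' x' (fun n => n) e' δ')
    (hswap : ∀ {n : ℕ} (u : Fin n → ℝ), ∑ j, u j = 0 → ∀ p : Fin n → Fin k → ℕ,
      ∑ j, u j • x' (p j) = ∑ j, u j • x (p j))
    (c : ℝ) (hlow : LowerL1 ρ' e' c) : LowerL1 ρ e c := by
  intro n a
  obtain _ | m := n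
  · simpa using apply_nonneg ρ 0
  by_cases hS : (∑ i, |a i|) = 0
  · rw [hS, mul_zero]
    exact apply_nonneg _ _
  set S : ℝ := ∑ i, |a i| with hSdef
  have hSpos : 0 < S :=
    lt_of_le_of_ne (Finset.sum_nonneg fun i _ => abs_nonneg _) (Ne.symm hS)
  set u : Fin (m+1) → ℝ := fun i => a i / S with hudef
  have hu1 : ∀ j, |u j| ≤ 1 := by
    intro j
    have hle : |a j| ≤ S := hSdef ▸ Finset.single_le_sum
      (fun i _ => abs_nonneg (a i)) (Finset.mem_univ j)
    rw [hudef]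
    simp only [abs_div, abs_of_pos hSpos]
    exact (div_le_one hSpos).mpr hle
  -- the normalized core estimate
  have hcore : c * ∑ j, |u j| ≤ ρ (∑ j, u j • e (j : ℕ)) := by
    refine le_of_forall_pos_le_add ?_
    intro ε hε
    obtain ⟨l, hml, hδl, hδ'l⟩ := st12_exists_l δ δ' hδ.2 hδ'.2 (m+1+m) (half_pos hε)
    set b : Fin ((m+1)+(m+1)) → ℝ := Fin.append u (fun j => -u j) with hb
    have hb1 : ∀ j, |b j| ≤ 1 := by
      intro j
      refine Fin.addCases (fun i0 => ?_) (fun i0 => ?_) j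
      · simpa only [hb, Fin.append_left] using hu1 i0
      · simpa only [hb, Fin.append_right, abs_neg] using hu1 i0
    have hb0 : ∑ j, b j = 0 := by
      rw [hb, Fin.sum_univ_add]
      simp only [Fin.append_left, Fin.append_right, Finset.sum_neg_distrib]
      ring
    have hfull : |‖∑ j : Fin ((m+1)+(m+1)),
          b j • x' (fun i : Fin k => l + (i : ℕ) * ((m+1)+(m+1)) + (0 + (j : ℕ)))‖ -
        ρ' (∑ j : Fin ((m+1)+(m+1)), b j • e' (j : ℕ))| ≤ δ' l :=
      st12_approx ρ' x' e' δ' hgen' (m+1+m) l hml ((m+1)+(m+1)) 0 (by omega) b hb1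
    have hA := st12_approx ρ x e δ hgen m l (by omega) ((m+1)+(m+1)) 0 (by omega) u hu1
    have hB := st12_approx ρ x e δ hgen m l (by omega) ((m+1)+(m+1)) (m+1) (by omega) u hu1
    simp only [zero_add] at hfull hA
    have h1 : (∑ j : Fin ((m+1)+(m+1)),
          b j • x' (fun i : Fin k => l + (i : ℕ) * ((m+1)+(m+1)) + (j : ℕ)))
        = ∑ j : Fin ((m+1)+(m+1)),
          b j • x (fun i : Fin k => l + (i : ℕ) * ((m+1)+(m+1)) + (j : ℕ)) :=
      hswap b hb0 _
    have h2 : (∑ j : Fin ((m+1)+(m+1)),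
          b j • x (fun i : Fin k => l + (i : ℕ) * ((m+1)+(m+1)) + (j : ℕ)))
        = (∑ j : Fin (m+1), u j • x (fun i : Fin k => l + (i : ℕ) * ((m+1)+(m+1)) + (j : ℕ)))
          - ∑ j : Fin (m+1), u j • x (fun i : Fin k => l + (i : ℕ) * ((m+1)+(m+1)) + (m + 1 + (j : ℕ))) := by
      rw [Fin.sum_univ_add]
      simp only [hb, Fin.append_left, Fin.append_right, Fin.coe_castAdd, Fin.coe_natAdd,
        neg_smul, Finset.sum_neg_distrib, sub_eq_add_neg]
    rw [h1, h2] at hfull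
    have hsb : (∑ j : Fin ((m+1)+(m+1)), |b j|) = 2 * ∑ j : Fin (m+1), |u j| := by
      rw [Fin.sum_univ_add]
      simp only [hb, Fin.append_left, Fin.append_right, abs_neg]
      ring
    have hEb : c * (2 * ∑ j : Fin (m+1), |u j|)
        ≤ ρ' (∑ j : Fin ((m+1)+(m+1)), b j • e' (j : ℕ)) := by
      have := hlow ((m+1)+(m+1)) b
      rwa [hsb] at this
    have hnorm := norm_sub_le
      (∑ j : Fin (m+1), u j • x (fun i : Fin k => l + (i : ℕ) * ((m+1)+(m+1)) + (j : ℕ)))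
      (∑ j : Fin (m+1), u j • x (fun i : Fin k => l + (i : ℕ) * ((m+1)+(m+1)) + (m + 1 + (j : ℕ))))
    have hA' := abs_le.mp hA
    have hB' := abs_le.mp hB
    have hfull' := abs_le.mp hfull
    linarith
  -- rescale
  have hrepr : (∑ i : Fin (m+1), a i • e (i : ℕ))
      = S • ∑ i : Fin (m+1), u i • e (i : ℕ) := by
    rw [Finset.smul_sum]
    refine Finset.sum_congr rfl fun i _ => ?_
    rw [smul_smul]
    congr 1
    rw [hudef]
    field_simp
  have hT1 : (∑ i : Fin (m+1), |u i|) = 1 := by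
    rw [hudef]
    simp only [abs_div, abs_of_pos hSpos]
    rw [← Finset.sum_div, ← hSdef, div_self (ne_of_gt hSpos)]
  rw [hT1, mul_one] at hcore
  rw [hrepr, map_smul_eq_mul, Real.norm_eq_abs, abs_of_pos hSpos]
  calc c * S = S * c := by ring
    _ ≤ S * ρ (∑ i : Fin (m+1), u i • e (i : ℕ)) :=
        mul_le_mul_of_nonneg_left hcore hSpos.le

private lemma st12_rho_e {X : Type*} [SeminormedAddCommGroup X] [NormedSpace ℝ X]
    {E : Type*} [AddCommGroup E] [Module ℝ E] (ρ : Seminorm ℝ E)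
    {k : ℕ} (x : (Fin k → ℕ) → X) (e : ℕ → E) (δ : ℕ → ℝ)
    (hgen : Generates ρ x (fun n => n) e δ) (hδ : IsNullPos δ) (i : ℕ) :
    ρ (e i) = ρ (e 0) := by
  have key : ∀ ε : ℝ, 0 < ε → |ρ (e i) - ρ (e 0)| ≤ 0 + ε := by
    intro ε hε
    obtain ⟨l, hml, hδl, -⟩ := st12_exists_l δ δ hδ.2 hδ.2 i (half_pos hε)
    have h1 := st12_approx ρ x e δ hgen i l hml (i+1) 0 (by omega)
      (fun j => if j = Fin.last i then 1 else 0)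
      (by intro j; by_cases h : j = Fin.last i <;> simp [h])
    have h2 := st12_approx ρ x e δ hgen 0 l (Nat.zero_le l) (i+1) i (by omega)
      (fun _ => 1) (by intro j; simp)
    simp only [ite_smul, one_smul, zero_smul, Finset.sum_ite_eq', Finset.mem_univ,
      if_true, Fin.val_last, zero_add] at h1
    simp only [Fin.sum_univ_succ, Fin.sum_univ_zero, one_smul, Fin.val_zero,
      add_zero, Fin.val_succ, Fin.cons_zero] at h2
    have h1' := abs_le.mp h1
    have h2' := abs_le.mp h2
    rw [abs_le]
    constructor <;> linarith
  have h0 : |ρ (e i) - ρ (e 0)| ≤ 0 := le_of_forall_pos_le_add key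
  have h3 : ρ (e i) - ρ (e 0) = 0 := abs_eq_zero.mp (le_antisymm h0 (abs_nonneg _))
  linarith

private lemma st12_upper {X : Type*} [SeminormedAddCommGroup X] [NormedSpace ℝ X]
    {E : Type*} [AddCommGroup E] [Module ℝ E] (ρ : Seminorm ℝ E)
    {k : ℕ} (x : (Fin k → ℕ) → X) (e : ℕ → E) (δ : ℕ → ℝ)
    (hgen : Generates ρ x (fun n => n) e δ) (hδ : IsNullPos δ)
    (n : ℕ) (a : Fin n → ℝ) :
    ρ (∑ i, a i • e (i : ℕ)) ≤ ρ (e 0) * ∑ i, |a i| := by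
  have htri : ∀ s : Finset (Fin n),
      ρ (∑ i ∈ s, a i • e (i : ℕ)) ≤ ∑ i ∈ s, ρ (a i • e (i : ℕ)) := by
    intro s
    induction s using Finset.induction with
    | empty => simp
    | @insert j s hj ih =>
      rw [Finset.sum_insert hj, Finset.sum_insert hj]
      exact (map_add_le_add ρ _ _).trans (by linarith)
  calc ρ (∑ i, a i • e (i : ℕ)) ≤ ∑ i, ρ (a i • e (i : ℕ)) := htri Finset.univ
    _ = ∑ i, |a i| * ρ (e 0) := by
        refine Finset.sum_congr rfl fun i _ => ?_
        rw [map_smul_eq_mul, Real.norm_eq_abs, st12_rho_e ρ x e δ hgen hδ (i : ℕ)]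
    _ = ρ (e 0) * ∑ i, |a i| := by rw [← Finset.sum_mul]; ring

private lemma st12_equiv {X : Type*} [SeminormedAddCommGroup X] [NormedSpace ℝ X]
    {E E' : Type*} [AddCommGroup E] [Module ℝ E] [AddCommGroup E'] [Module ℝ E']
    (ρ : Seminorm ℝ E) (ρ' : Seminorm ℝ E') {k : ℕ}
    (x x' : (Fin k → ℕ) → X) (e : ℕ → E) (e' : ℕ → E') (δ δ' : ℕ → ℝ)
    (hδ : IsNullPos δ) (hδ' : IsNullPos δ')
    (hgen : Generates ρ x (fun n => n) e δ)
    (hgen' : Generates ρ' x' (fun n => n) e' δ')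
    (hswap : ∀ {n : ℕ} (u : Fin n → ℝ), ∑ j, u j = 0 → ∀ p : Fin n → Fin k → ℕ,
      ∑ j, u j • x' (p j) = ∑ j, u j • x (p j)) :
    EquivL1Basis ρ e → EquivL1Basis ρ' e' := by
  rintro ⟨c, C, hc, hcC, hlow, hupp⟩
  have hlow' : LowerL1 ρ' e' c :=
    st12_lower ρ' ρ x' x e' e δ' δ hδ' hδ hgen' hgen
      (fun u hu p => (hswap u hu p).symm) c hlow
  have hce : c ≤ ρ' (e' 0) := by
    have := hlow' 1 (fun _ => 1)
    simpa using this
  exact ⟨c, ρ' (e' 0), hc, hce, hlow',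
    fun n a => st12_upper ρ' x' e' δ' hgen' hδ' n a⟩

end St12Helpers

/-- Suppose `x` and `x' = x - x₀` generate the `k`-spreading models
`(e n)` and `(e' n)` respectively (with `M = ℕ`). Then (a) the two models assign equal
seminorms to all linear combinations whose coefficients sum to zero, and (c) one is
equivalent to the usual basis of `ℓ¹` iff the other is. -/
theorem statement12 {X : Type*} [NormedAddCommGroup X] [NormedSpace ℝ X] [CompleteSpace X]
    (k : ℕ) (hk : 0 < k) (x x' : (Fin k → ℕ) → X) (x₀ : X)
    (hx' : ∀ s : Fin k → ℕ, x' s = x s - x₀)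
    {E E' : Type*} [AddCommGroup E] [Module ℝ E] [AddCommGroup E'] [Module ℝ E']
    (ρ : Seminorm ℝ E) (ρ' : Seminorm ℝ E') (e : ℕ → E) (e' : ℕ → E')
    (δ δ' : ℕ → ℝ) (hδ : IsNullPos δ) (hδ' : IsNullPos δ')
    (hgen : Generates ρ x (fun n => n) e δ)
    (hgen' : Generates ρ' x' (fun n => n) e' δ') :
    (∀ (n : ℕ) (a : Fin n → ℝ), ∑ i, a i = 0 →
      ρ (∑ i, a i • e (i : ℕ)) = ρ' (∑ i, a i • e' (i : ℕ))) ∧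
    (EquivL1Basis ρ e ↔ EquivL1Basis ρ' e') := by
  have hswap : ∀ {n : ℕ} (u : Fin n → ℝ), ∑ j, u j = 0 → ∀ p : Fin n → Fin k → ℕ,
      ∑ j, u j • x' (p j) = ∑ j, u j • x (p j) :=
    fun u hu p => st12_swap_gen x x' x₀ hx' u hu p
  refine ⟨st12_a ρ ρ' x x' e e' δ δ' hδ hδ' hgen hgen' hswap, ?_, ?_⟩
  · exact st12_equiv ρ ρ' x x' e e' δ δ' hδ hδ' hgen hgen' hswap
  · exact st12_equiv ρ' ρ x' x e' e δ' δ hδ' hδ hgen' hgen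
      (fun u hu p => (hswap u hu p).symm)
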